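/- Let G and F be proper, point-separating complete subspaces of [-∞,∞]^X and [-∞,∞]^Y respectively, and let J : F → G be a (max,+)-isomorphism. If J({e'_y + λ' : y ∈ Y, λ' ∈ [-∞,∞]}) = {e_x + λ : x ∈ X, λ ∈ [-∞,∞]}, then there exist g : X → ℝ and a bijection φ : X → Y such that Jf(x) = g(x) + f(φ(x)) for all f ∈ F and x ∈ X; moreover this representation (g, φ) is unique, and conversely every map of this form (with the required stability of G and F under the induced translations) is a (max,+)-isomorphism. -/

import Mathlib

/-- `G` is stable under arbitrary pointwise suprema. -/
def SupStable {X : Type*} (G : Set (X → EReal)) : Prop :=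
  ∀ S : Set (X → EReal), S ⊆ G → (fun x => ⨆ f ∈ S, f x) ∈ G

/-- A complete subspace: stable under arbitrary suprema and addition of real scalars. -/
def CompleteSubspace {X : Type*} (G : Set (X → EReal)) : Prop :=
  SupStable G ∧ ∀ g ∈ G, ∀ l : ℝ, (fun x => g x + (l : EReal)) ∈ G

/-- `G` is proper: at every point some function of `G` takes a finite value. -/
def ProperAt {X : Type*} (G : Set (X → EReal)) : Prop :=
  ∀ x : X, ∃ g ∈ G, g x ≠ ⊤ ∧ g x ≠ ⊥

/-- `G` is point separating. -/
def Separating {X : Type*} (G : Set (X → EReal)) : Prop :=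
  ∀ x x' : X, x ≠ x' → ∃ g₁ ∈ G, ∃ g₂ ∈ G, ∃ a₁ b₁ a₂ b₂ : ℝ,
    g₁ x = (a₁ : EReal) ∧ g₁ x' = (b₁ : EReal) ∧ g₂ x = (a₂ : EReal) ∧ g₂ x' = (b₂ : EReal) ∧
    a₁ - b₁ ≠ a₂ - b₂

/-- `e_x = sup { u ∈ G | u(x) ≤ 0 }`. -/
noncomputable def eFun {X : Type*} (G : Set (X → EReal)) (x : X) : X → EReal :=
  fun z => ⨆ u ∈ {u | u ∈ G ∧ u x ≤ 0}, u z

/-- `J` is a (max,+)-isomorphism from `F` onto `G` with inverse `J'`. -/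
def MaxPlusIso {X Y : Type*} (F : Set (Y → EReal)) (G : Set (X → EReal))
    (J : (Y → EReal) → (X → EReal)) (J' : (X → EReal) → (Y → EReal)) : Prop :=
  (∀ f ∈ F, J f ∈ G) ∧ (∀ h ∈ G, J' h ∈ F) ∧
  (∀ f ∈ F, J' (J f) = f) ∧ (∀ h ∈ G, J (J' h) = h) ∧
  (∀ f ∈ F, ∀ f' ∈ F, J (f ⊔ f') = J f ⊔ J f') ∧
  (∀ f ∈ F, ∀ l : ℝ, J (fun y => f y + (l : EReal)) = fun x => J f x + (l : EReal))

namespace MPAux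

lemma cancel (a : ℝ) (t : EReal) : (↑(-a) : EReal) + (↑a + t) = t := by
  induction t using EReal.rec with
  | bot => simp
  | coe r => rw [← EReal.coe_add, ← EReal.coe_add]; norm_num
  | top => rw [EReal.coe_add_top, EReal.coe_add_top]

lemma assoc (a l : ℝ) (t : EReal) : (↑a : EReal) + (t + ↑l) = (↑a + t) + ↑l := by
  induction t using EReal.rec with
  | bot => simp
  | coe r => rw [← EReal.coe_add, ← EReal.coe_add, ← EReal.coe_add, ← EReal.coe_add]; ring_nf
  | top => simp [EReal.coe_add_top, EReal.top_add_coe]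

lemma assoc' (m c : ℝ) (t : EReal) : (t + ↑m) + ↑c = t + ↑(m + c) := by
  induction t using EReal.rec with
  | bot => simp
  | coe r => rw [← EReal.coe_add, ← EReal.coe_add, ← EReal.coe_add]; ring_nf
  | top => simp [EReal.top_add_coe]

lemma unshift (l : ℝ) (t : EReal) : (t + ↑(-l)) + ↑l = t := by
  rw [assoc']; norm_num

lemma addmax (a : ℝ) (s t : EReal) : (↑a : EReal) + (s ⊔ t) = (↑a + s) ⊔ (↑a + t) := by
  rcases le_total s t with h | h
  · rw [sup_eq_right.2 h, sup_eq_right.2 (add_le_add le_rfl h)]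
  · rw [sup_eq_left.2 h, sup_eq_left.2 (add_le_add le_rfl h)]

lemma shift (a l : ℝ) (t : EReal) : (↑a : EReal) + t ≤ ↑l ↔ t ≤ ↑(l - a) := by
  induction t using EReal.rec with
  | bot => simp
  | coe r => rw [← EReal.coe_add, EReal.coe_le_coe_iff, EReal.coe_le_coe_iff]; constructor <;> intro <;> linarith
  | top =>
    rw [EReal.coe_add_top]
    simp only [top_le_iff]
    exact iff_of_false (EReal.coe_ne_top _) (EReal.coe_ne_top _)

lemma ebot (s : EReal) (h : ∀ l : ℝ, s ≤ l) : s = ⊥ := by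
  induction s using EReal.rec with
  | bot => rfl
  | coe r => have := EReal.coe_le_coe_iff.1 (h (r - 1)); linarith
  | top => exact absurd (h 0) (by simp)

lemma eq_of_forall (s t : EReal) (h : ∀ l : ℝ, s ≤ l ↔ t ≤ l) : s = t := by
  apply le_antisymm
  · induction t using EReal.rec with
    | bot => exact le_of_eq (ebot s fun l => (h l).2 bot_le)
    | coe r => exact (h r).2 le_rfl
    | top => exact le_top
  · induction s using EReal.rec with
    | bot => exact le_of_eq (ebot t fun l => (h l).1 bot_le)
    | coe r => exact (h r).1 le_rfl
    | top => exact le_top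

lemma eq_real_of_add {t : EReal} {c c' : ℝ} (h : t + ↑c = ↑c') : t = ↑(c' - c) := by
  induction t using EReal.rec with
  | bot => rw [EReal.bot_add] at h; exact absurd h.symm (EReal.coe_ne_bot _)
  | coe r =>
    rw [← EReal.coe_add, EReal.coe_eq_coe_iff] at h
    exact_mod_cast congrArg (fun x : ℝ => (↑x : EReal)) (by linarith : r = c' - c)
  | top => rw [EReal.top_add_coe] at h; exact absurd h.symm (EReal.coe_ne_top _)

lemma add_top_idem (t : EReal) : (t + ⊤) + ((1:ℝ) : EReal) = t + ⊤ := by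
  induction t using EReal.rec with
  | bot => simp
  | coe r => rw [EReal.coe_add_top, EReal.top_add_coe]
  | top => rw [EReal.top_add_top, EReal.top_add_coe]

lemma isup_nat (t : EReal) : (⨆ n : ℕ, (t + ((n : ℝ) : EReal))) = t + ⊤ := by
  induction t using EReal.rec with
  | bot => simp
  | top => simp only [EReal.top_add_coe, EReal.top_add_top, iSup_const]
  | coe r =>
    rw [EReal.coe_add_top]
    apply le_antisymm le_top
    rw [top_le_iff, iSup_eq_top]
    intro b hb
    induction b using EReal.rec with
    | bot => exact ⟨0, by rw [← EReal.coe_add]; exact EReal.bot_lt_coe _⟩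
    | top => exact absurd hb (lt_irrefl _)
    | coe s =>
      obtain ⟨n, hn⟩ := exists_nat_gt (s - r)
      exact ⟨n, by rw [← EReal.coe_add]; exact_mod_cast (by linarith : s < r + n)⟩

variable {X : Type*} {G : Set (X → EReal)}

lemma eFun_mem (hG : SupStable G) (x : X) : eFun G x ∈ G :=
  hG {u | u ∈ G ∧ u x ≤ 0} (fun u hu => hu.1)

lemma le_eFun {u : X → EReal} (hu : u ∈ G) {x : X} (hx : u x ≤ 0) (z : X) :
    u z ≤ eFun G x z :=
  le_biSup (f := fun u : X → EReal => u z) ⟨hu, hx⟩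

lemma eFun_self (hG : CompleteSubspace G) (hGp : ProperAt G) (x : X) : eFun G x x = 0 := by
  apply le_antisymm
  · exact iSup₂_le fun u hu => hu.2
  · obtain ⟨g, hg, ht, hb⟩ := hGp x
    have hr : g x = ↑((g x).toReal) := (EReal.coe_toReal ht hb).symm
    set r := (g x).toReal
    have hu : (fun z => g z + ↑(-r)) ∈ G := hG.2 g hg (-r)
    have hux : g x + ↑(-r) ≤ 0 := by rw [hr, ← EReal.coe_add]; norm_num
    have := le_eFun hu hux x
    calc (0 : EReal) = g x + ↑(-r) := by rw [hr, ← EReal.coe_add]; norm_num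
      _ ≤ eFun G x x := this

lemma eval_iff (hG : CompleteSubspace G) (hGp : ProperAt G) {h : X → EReal} (hh : h ∈ G)
    (x : X) (l : ℝ) : h x ≤ ↑l ↔ ∀ z, h z ≤ eFun G x z + ↑l := by
  constructor
  · intro hx z
    have hu : (fun z => h z + ↑(-l)) ∈ G := hG.2 h hh (-l)
    have hux : h x + ↑(-l) ≤ 0 := by
      calc h x + ↑(-l) ≤ ↑l + ↑(-l) := add_le_add hx le_rfl
        _ = 0 := by rw [← EReal.coe_add]; norm_num
    have hle := le_eFun hu hux z
    calc h z = (h z + ↑(-l)) + ↑l := (unshift l (h z)).symm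
      _ ≤ eFun G x z + ↑l := add_le_add hle le_rfl
  · intro hz
    have := hz x
    rwa [eFun_self hG hGp, zero_add] at this

lemma le_val (hG : CompleteSubspace G) {g : X → EReal} (hg : g ∈ G) {x x' : X} {a b : ℝ}
    (hga : g x = ↑a) (hgb : g x' = ↑b) : ((b - a : ℝ) : EReal) ≤ eFun G x x' := by
  have hu : (fun z => g z + ↑(-a)) ∈ G := hG.2 g hg (-a)
  have hux : g x + ↑(-a) ≤ 0 := by rw [hga, ← EReal.coe_add]; norm_num
  have := le_eFun hu hux x'
  rwa [hgb, ← EReal.coe_add, show b + -a = b - a by ring] at this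

lemma eFun_uniq (hG : CompleteSubspace G) (hGp : ProperAt G) (hGs : Separating G)
    {x x' : X} {c c' : ℝ} (h : ∀ z, eFun G x z + (c : EReal) = eFun G x' z + (c' : EReal)) :
    x = x' ∧ c = c' := by
  by_cases hxx : x = x'
  · subst hxx
    refine ⟨rfl, ?_⟩
    have := h x
    rw [eFun_self hG hGp, zero_add, zero_add] at this
    exact_mod_cast this
  · exfalso
    obtain ⟨g₁, hg₁, g₂, hg₂, a₁, b₁, a₂, b₂, e1, e2, e3, e4, hne⟩ := hGs x x' hxx
    have h1 : eFun G x x' = ↑(c' - c) := by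
      have := h x'
      rw [eFun_self hG hGp, zero_add] at this
      exact eq_real_of_add this
    have h2 : eFun G x' x = ↑(c - c') := by
      have := (h x).symm
      rw [eFun_self hG hGp, zero_add] at this
      exact eq_real_of_add this
    have k1 : b₁ - a₁ ≤ c' - c := by
      have := le_val hG hg₁ e1 e2; rw [h1] at this; exact_mod_cast this
    have k2 : a₁ - b₁ ≤ c - c' := by
      have := le_val hG hg₁ e2 e1; rw [h2] at this; exact_mod_cast this
    have k3 : b₂ - a₂ ≤ c' - c := by
      have := le_val hG hg₂ e3 e4; rw [h1] at this; exact_mod_cast this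
    have k4 : a₂ - b₂ ≤ c - c' := by
      have := le_val hG hg₂ e4 e3; rw [h2] at this; exact_mod_cast this
    exact hne (by linarith)

lemma pair_mem (hG : SupStable G) {f f' : X → EReal} (hf : f ∈ G) (hf' : f' ∈ G) :
    f ⊔ f' ∈ G := by
  have h := hG {f, f'} (by rintro u (rfl | rfl) <;> assumption)
  have he : (fun x => ⨆ u ∈ ({f, f'} : Set (X → EReal)), u x) = f ⊔ f' := by
    funext x
    simp [iSup_or, iSup_sup_eq]
  rwa [he] at h

lemma bot_mem (hG : SupStable G) : (fun _ : X => (⊥ : EReal)) ∈ G := by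
  have h := hG ∅ (by simp)
  have he : (fun x => ⨆ u ∈ (∅ : Set (X → EReal)), u x) = fun _ : X => (⊥ : EReal) := by
    funext x; simp
  rwa [he] at h

lemma add_top_mem (hG : CompleteSubspace G) {f : X → EReal} (hf : f ∈ G) :
    (fun z => f z + (⊤ : EReal)) ∈ G := by
  have h := hG.1 (Set.range fun n : ℕ => fun z => f z + ((n : ℝ) : EReal))
    (by rintro u ⟨n, rfl⟩; exact hG.2 f hf _)
  have he : (fun x => ⨆ u ∈ Set.range fun n : ℕ => fun z => f z + ((n : ℝ) : EReal), u x)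
      = fun z => f z + (⊤ : EReal) := by
    funext x
    simp only [iSup_range]
    exact isup_nat (f x)
  rwa [he] at h

end MPAux

theorem stmt8 {X Y : Type*} (F : Set (Y → EReal)) (G : Set (X → EReal))
    (hF : CompleteSubspace F) (hG : CompleteSubspace G)
    (hFp : ProperAt F) (hFs : Separating F) (hGp : ProperAt G) (hGs : Separating G)
    (J : (Y → EReal) → (X → EReal)) (J' : (X → EReal) → (Y → EReal))
    (hJ : MaxPlusIso F G J J') :
    -- (i) ⇒ (ii): if J maps the family {e'_y + λ'} onto the family {e_x + λ} then
    -- J f = g + f ∘ φ with a bijective reparametrization and the induced stabilities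
    ((∀ (y : Y) (l : EReal), ∃ (x : X) (m : EReal),
        J (fun z => eFun F y z + l) = fun z => eFun G x z + m) →
     (∀ (x : X) (m : EReal), ∃ (y : Y) (l : EReal),
        J (fun z => eFun F y z + l) = fun z => eFun G x z + m) →
      ∃ (g : X → ℝ) (φ : X → Y) (ψ : Y → X),
        Function.LeftInverse ψ φ ∧ Function.RightInverse ψ φ ∧
        (∀ f ∈ F, ∀ x, J f x = (g x : EReal) + f (φ x)) ∧
        (∀ f ∈ F, (fun x => (g x : EReal) + f (φ x)) ∈ G) ∧
        (∀ h ∈ G, (fun y => (-(g (ψ y)) : ℝ) + h (ψ y)) ∈ F)) ∧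
    -- uniqueness of the representation (g, φ)
    (∀ (g g' : X → ℝ) (φ φ' : X → Y), Function.Bijective φ → Function.Bijective φ' →
      (∀ f ∈ F, ∀ x, J f x = (g x : EReal) + f (φ x)) →
      (∀ f ∈ F, ∀ x, J f x = (g' x : EReal) + f (φ' x)) →
      g = g' ∧ φ = φ') ∧
    -- conversely, every map of this form is a (max,+)-isomorphism
    (∀ (g : X → ℝ) (φ : X → Y) (ψ : Y → X),
      Function.LeftInverse ψ φ → Function.RightInverse ψ φ →
      (∀ f ∈ F, (fun x => (g x : EReal) + f (φ x)) ∈ G) →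
      (∀ h ∈ G, (fun y => (-(g (ψ y)) : ℝ) + h (ψ y)) ∈ F) →
      MaxPlusIso F G (fun f => fun x => (g x : EReal) + f (φ x))
        (fun h => fun y => (-(g (ψ y)) : ℝ) + h (ψ y))) := by
  obtain ⟨hJF, hJ'G, hJ'J, hJJ', hsup, hsc⟩ := hJ
  refine ⟨?_, ?_, ?_⟩
  · -- Part (i)
    intro hyp1 hyp2
    have botF : (fun _ : Y => (⊥ : EReal)) ∈ F := MPAux.bot_mem hF.1
    have botG : (fun _ : X => (⊥ : EReal)) ∈ G := MPAux.bot_mem hG.1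
    have Jinj : ∀ f ∈ F, ∀ f' ∈ F, J f = J f' → f = f' := by
      intro f hf f' hf' h
      rw [← hJ'J f hf, ← hJ'J f' hf', h]
    have Jmono : ∀ f ∈ F, ∀ f' ∈ F, (∀ z, f z ≤ f' z) → ∀ x, J f x ≤ J f' x := by
      intro f hf f' hf' hle x
      have hsupeq : f ⊔ f' = f' := funext fun z => by
        rw [Pi.sup_apply]; exact sup_eq_right.2 (hle z)
      have hs := hsup f hf f' hf'
      rw [hsupeq] at hs
      calc J f x ≤ (J f ⊔ J f') x := by rw [Pi.sup_apply]; exact le_sup_left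
        _ = J f' x := by rw [← hs]
    have J'mono : ∀ h ∈ G, ∀ h' ∈ G, (∀ z, h z ≤ h' z) → ∀ y, J' h y ≤ J' h' y := by
      intro h hh h' hh' hle y
      have hfF := hJ'G h hh
      have hf'F := hJ'G h' hh'
      have hsupeq : h ⊔ h' = h' := funext fun z => by
        rw [Pi.sup_apply]; exact sup_eq_right.2 (hle z)
      have h1 : J (J' h ⊔ J' h') = J (J' h') := by
        rw [hsup _ hfF _ hf'F, hJJ' h hh, hJJ' h' hh', hsupeq]
      have h2 := Jinj _ (MPAux.pair_mem hF.1 hfF hf'F) _ hf'F h1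
      calc J' h y ≤ (J' h ⊔ J' h') y := by rw [Pi.sup_apply]; exact le_sup_left
        _ = J' h' y := by rw [h2]
    have Jbot : J (fun _ : Y => (⊥ : EReal)) = fun _ : X => (⊥ : EReal) := by
      funext x
      refine le_antisymm ?_ bot_le
      have hle := Jmono _ botF _ (hJ'G _ botG) (fun z => bot_le) x
      rwa [hJJ' _ botG] at hle
    -- Step A : the map τ
    have stepA : ∀ y : Y, ∃ (x : X) (m : ℝ),
        J (eFun F y) = fun z => eFun G x z + (m : EReal) := by
      intro y
      obtain ⟨x, m, hxm⟩ := hyp1 y 0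
      have h0 : (fun z => eFun F y z + (0 : EReal)) = eFun F y := funext fun z => add_zero _
      rw [h0] at hxm
      induction m using EReal.rec with
      | bot =>
        exfalso
        have hb : (fun z => eFun G x z + (⊥ : EReal)) = fun _ : X => (⊥ : EReal) :=
          funext fun z => EReal.add_bot _
        rw [hb, ← Jbot] at hxm
        have h1 := Jinj _ (MPAux.eFun_mem hF.1 y) _ botF hxm
        have h2 : eFun F y y = (⊥ : EReal) := congrFun h1 y
        rw [MPAux.eFun_self hF hFp y] at h2
        have h3 : ((0 : ℝ) : EReal) = ⊥ := by rw [EReal.coe_zero]; exact h2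
        exact EReal.coe_ne_bot 0 h3
      | coe m => exact ⟨x, m, hxm⟩
      | top =>
        exfalso
        have h1 := hsc _ (MPAux.eFun_mem hF.1 y) 1
        rw [hxm] at h1
        have h2 : (fun x' => (fun z => eFun G x z + (⊤ : EReal)) x' + ((1 : ℝ) : EReal))
            = fun z => eFun G x z + (⊤ : EReal) := funext fun z => MPAux.add_top_idem _
        rw [h2, ← hxm] at h1
        have h3 := Jinj _ (hF.2 _ (MPAux.eFun_mem hF.1 y) 1) _ (MPAux.eFun_mem hF.1 y) h1
        have h4 : eFun F y y + ((1 : ℝ) : EReal) = eFun F y y := congrFun h3 y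
        rw [MPAux.eFun_self hF hFp y, zero_add] at h4
        rw [← EReal.coe_zero, EReal.coe_eq_coe_iff] at h4
        exact one_ne_zero h4
    choose τ mty hτ using stepA
    -- Step B : τ injective
    have τinj : ∀ y y', τ y = τ y' → y = y' := by
      intro y y' he
      have h1 := hsc _ (MPAux.eFun_mem hF.1 y) (mty y' - mty y)
      rw [hτ y] at h1
      have h2 : (fun x' => (fun z => eFun G (τ y) z + ((mty y : ℝ) : EReal)) x'
            + ((mty y' - mty y : ℝ) : EReal))
          = fun z => eFun G (τ y') z + ((mty y' : ℝ) : EReal) := by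
        funext z
        show (eFun G (τ y) z + ↑(mty y)) + ↑(mty y' - mty y) = _
        rw [MPAux.assoc', he]
        have : mty y + (mty y' - mty y) = mty y' := by ring
        rw [this]
      rw [h2, ← hτ y'] at h1
      have h3 := Jinj _ (hF.2 _ (MPAux.eFun_mem hF.1 y) _) _ (MPAux.eFun_mem hF.1 y') h1
      have h4 : ∀ z, eFun F y z + ((mty y' - mty y : ℝ) : EReal)
          = eFun F y' z + ((0 : ℝ) : EReal) := by
        intro z
        have h5 : eFun F y z + ((mty y' - mty y : ℝ) : EReal) = eFun F y' z := congrFun h3 z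
        rw [EReal.coe_zero, add_zero]
        exact h5
      exact (MPAux.eFun_uniq hF hFp hFs h4).1
    -- Step C : τ surjective
    have τsurj : ∀ x : X, ∃ y, τ y = x := by
      intro x
      obtain ⟨y, l, hyl⟩ := hyp2 x 0
      have hrhs : (fun z => eFun G x z + (0 : EReal)) = eFun G x := funext fun z => add_zero _
      rw [hrhs] at hyl
      induction l using EReal.rec with
      | bot =>
        exfalso
        have hb : (fun z => eFun F y z + (⊥ : EReal)) = fun _ : Y => (⊥ : EReal) :=
          funext fun z => EReal.add_bot _
        rw [hb, Jbot] at hyl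
        have h2 : (⊥ : EReal) = eFun G x x := congrFun hyl x
        rw [MPAux.eFun_self hG hGp x] at h2
        have h3 : ((0 : ℝ) : EReal) = ⊥ := by rw [EReal.coe_zero]; exact h2.symm
        exact EReal.coe_ne_bot 0 h3
      | coe l =>
        refine ⟨y, ?_⟩
        have h1 := hsc _ (MPAux.eFun_mem hF.1 y) l
        rw [hτ y] at h1
        have heq := h1.symm.trans hyl
        have h4 : ∀ z, eFun G (τ y) z + ((mty y + l : ℝ) : EReal)
            = eFun G x z + ((0 : ℝ) : EReal) := by
          intro z
          have h5 : (eFun G (τ y) z + ((mty y : ℝ) : EReal)) + ((l : ℝ) : EReal)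
              = eFun G x z := congrFun heq z
          rw [MPAux.assoc'] at h5
          rw [EReal.coe_zero, add_zero]
          exact h5
        exact (MPAux.eFun_uniq hG hGp hGs h4).1
      | top =>
        exfalso
        have hmem : (fun z => eFun F y z + (⊤ : EReal)) ∈ F :=
          MPAux.add_top_mem hF (MPAux.eFun_mem hF.1 y)
        have h1 := hsc _ hmem 1
        have h2 : (fun w => (fun z => eFun F y z + (⊤ : EReal)) w + ((1 : ℝ) : EReal))
            = fun z => eFun F y z + (⊤ : EReal) := funext fun z => MPAux.add_top_idem _
        rw [h2, hyl] at h1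
        have h3 : eFun G x x = eFun G x x + ((1 : ℝ) : EReal) := congrFun h1 x
        rw [MPAux.eFun_self hG hGp x, zero_add] at h3
        rw [← EReal.coe_zero, EReal.coe_eq_coe_iff] at h3
        exact zero_ne_one h3
    choose φ hφ using τsurj
    -- main formula
    have main : ∀ f ∈ F, ∀ x, J f x = ((mty (φ x) : ℝ) : EReal) + f (φ x) := by
      intro f hf x
      apply MPAux.eq_of_forall
      intro l
      have hJfG := hJF f hf
      have hymem := MPAux.eFun_mem hF.1 (φ x)
      have h₂mem : (fun z => eFun F (φ x) z + ((l - mty (φ x) : ℝ) : EReal)) ∈ F :=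
        hF.2 _ hymem _
      have hJh₂ : J (fun z => eFun F (φ x) z + ((l - mty (φ x) : ℝ) : EReal))
          = fun z => eFun G x z + ((l : ℝ) : EReal) := by
        rw [hsc _ hymem _, hτ (φ x)]
        funext z
        show (eFun G (τ (φ x)) z + ↑(mty (φ x))) + ↑(l - mty (φ x)) = eFun G x z + ↑l
        rw [MPAux.assoc', hφ x]
        have : mty (φ x) + (l - mty (φ x)) = l := by ring
        rw [this]
      have step1 := MPAux.eval_iff hG hGp hJfG x l
      have step3 := MPAux.eval_iff hF hFp hf (φ x) (l - mty (φ x))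
      have step2 : (∀ z, J f z ≤ eFun G x z + ((l : ℝ) : EReal))
          ↔ (∀ z, f z ≤ eFun F (φ x) z + ((l - mty (φ x) : ℝ) : EReal)) := by
        constructor
        · intro hle z
          have hle' : ∀ w, J f w
              ≤ J (fun z => eFun F (φ x) z + ((l - mty (φ x) : ℝ) : EReal)) w := by
            intro w; rw [hJh₂]; exact hle w
          have hm := J'mono _ hJfG _ (hJF _ h₂mem) hle' z
          rwa [hJ'J f hf, hJ'J _ h₂mem] at hm
        · intro hle z
          have hm := Jmono f hf _ h₂mem hle z
          rw [hJh₂] at hm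
          exact hm
      have step4 : f (φ x) ≤ ((l - mty (φ x) : ℝ) : EReal)
          ↔ ((mty (φ x) : ℝ) : EReal) + f (φ x) ≤ ((l : ℝ) : EReal) :=
        (MPAux.shift (mty (φ x)) l (f (φ x))).symm
      exact (step1.trans step2).trans (step3.symm.trans step4)
    have memG : ∀ f ∈ F, (fun x => ((mty (φ x) : ℝ) : EReal) + f (φ x)) ∈ G := by
      intro f hf
      have he : (fun x => ((mty (φ x) : ℝ) : EReal) + f (φ x)) = J f :=
        funext fun x => (main f hf x).symm
      rw [he]; exact hJF f hf
    have memF : ∀ h ∈ G, (fun y => ((-(mty (φ (τ y))) : ℝ) : EReal) + h (τ y)) ∈ F := by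
      intro h hh
      have hfF := hJ'G h hh
      have he : (fun y => ((-(mty (φ (τ y))) : ℝ) : EReal) + h (τ y)) = J' h := by
        funext y
        have h1 := main (J' h) hfF (τ y)
        rw [hJJ' h hh] at h1
        show ((-(mty (φ (τ y))) : ℝ) : EReal) + h (τ y) = J' h y
        rw [h1, MPAux.cancel, τinj _ _ (hφ (τ y))]
      rw [he]; exact hfF
    exact ⟨fun x => mty (φ x), φ, τ, hφ, fun y => τinj _ _ (hφ (τ y)), main, memG, memF⟩
  · -- Part (ii) : uniqueness
    intro g g' φ φ' _ _ hrep hrep'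
    have key : ∀ x, φ x = φ' x ∧ g x = g' x := by
      intro x
      have hyy : φ x = φ' x := by
        by_contra hne
        obtain ⟨f₁, hf₁, f₂, hf₂, a₁, b₁, a₂, b₂, e1, e2, e3, e4, hne'⟩ :=
          hFs (φ x) (φ' x) hne
        have q1 : g x + a₁ = g' x + b₁ := by
          have h1 := (hrep f₁ hf₁ x).symm.trans (hrep' f₁ hf₁ x)
          rw [e1, e2, ← EReal.coe_add, ← EReal.coe_add] at h1
          exact_mod_cast h1
        have q2 : g x + a₂ = g' x + b₂ := by
          have h1 := (hrep f₂ hf₂ x).symm.trans (hrep' f₂ hf₂ x)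
          rw [e3, e4, ← EReal.coe_add, ← EReal.coe_add] at h1
          exact_mod_cast h1
        exact hne' (by linarith)
      refine ⟨hyy, ?_⟩
      obtain ⟨f, hf, ht, hb⟩ := hFp (φ x)
      have hr : f (φ x) = ↑((f (φ x)).toReal) := (EReal.coe_toReal ht hb).symm
      have h1 := (hrep f hf x).symm.trans (hrep' f hf x)
      rw [← hyy, hr, ← EReal.coe_add, ← EReal.coe_add] at h1
      have h2 : g x + (f (φ x)).toReal = g' x + (f (φ x)).toReal := by exact_mod_cast h1
      linarith
    exact ⟨funext fun x => (key x).2, funext fun x => (key x).1⟩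
  · -- Part (iii) : converse
    intro g φ ψ hl hr hmemG hmemF
    refine ⟨hmemG, hmemF, ?_, ?_, ?_, ?_⟩
    · intro f hf
      funext y
      show ((-(g (ψ y)) : ℝ) : EReal) + ((g (ψ y) : ℝ) + f (φ (ψ y))) = f y
      rw [hr y, MPAux.cancel]
    · intro h hh
      funext x
      show ((g x : ℝ) : EReal) + ((-(g (ψ (φ x))) : ℝ) + h (ψ (φ x))) = h x
      rw [hl x]
      have hc := MPAux.cancel (-(g x)) (h x)
      rwa [neg_neg] at hc
    · intro f hf f' hf'
      funext x
      show ((g x : ℝ) : EReal) + (f ⊔ f') (φ x) = _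
      rw [Pi.sup_apply, Pi.sup_apply]
      exact MPAux.addmax _ _ _
    · intro f hf l
      funext x
      show ((g x : ℝ) : EReal) + (f (φ x) + (l : EReal)) = ((g x : ℝ) + f (φ x)) + (l : EReal)
      exact MPAux.assoc _ _ _
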